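/- Assume the coordinate quasi-Codazzi setup on U and that Φ⁺ x and Φ⁻ x are invertible linear maps for every x ∈ U. Define induced connections on vector fields by ∇̃⁺_X Y (x) := (Φ⁺ x)⁻¹ ((∇⁺_X(Φ⁺Y))(x)) and ∇̃⁻_X Y (x) := (Φ⁻ x)⁻¹ ((∇⁻_X(Φ⁻Y))(x)). Then ∇̃⁺ and ∇̃⁻ are mutually dual with respect to h: for all smooth vector fields X, Y, Z : U → ℝⁿ and all x ∈ U, fderiv ℝ (fun y ↦ h y (Y y) (Z y)) x (X x) = h x ((∇̃⁺_X Y)(x)) (Z x) + h x (Y x) ((∇̃⁻_X Z)(x)). (Paper's Lemma 3.11, in a trivialization.) -/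

import Mathlib

noncomputable section

open Set

/-- ℝⁿ. -/
abbrev Vn (n : ℕ) : Type := Fin n → ℝ

/-- Pairings (fiber metrics pairing `E⁺` with `E⁻`) on the trivialized bundle. -/
abbrev Pairn (n : ℕ) : Type := Vn n →L[ℝ] Vn n →L[ℝ] ℝ

/-- Connection forms on the trivialized bundle. -/
abbrev Connn (n : ℕ) : Type := Vn n →L[ℝ] Vn n →L[ℝ] Vn n

/-- Bundle maps `TU → E±` in the trivialization. -/
abbrev Bdln (n : ℕ) : Type := Vn n →L[ℝ] Vn n

/-- Covariant derivative of the section `ν` along the vector field `X`,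
for the connection with connection form `A`. -/
def cov {n : ℕ} (A : Vn n → Connn n) (X ν : Vn n → Vn n) (x : Vn n) : Vn n :=
  fderiv ℝ ν x (X x) + A x (X x) (ν x)

/-- Lie bracket of vector fields on an open set of ℝⁿ. -/
def lieB {n : ℕ} (X Y : Vn n → Vn n) (x : Vn n) : Vn n :=
  fderiv ℝ Y x (X x) - fderiv ℝ X x (Y x)

/-- The section `Φ±Y : x ↦ Φ± x (Y x)`. -/
def secPhi {n : ℕ} (Φ : Vn n → Bdln n) (Y : Vn n → Vn n) : Vn n → Vn n :=
  fun x => Φ x (Y x)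

/-- The induced (possibly degenerate) metric `h x y z = 2 p x (Φ⁺ x y) (Φ⁻ x z)`. -/
def hmet {n : ℕ} (p : Vn n → Pairn n) (Φp Φm : Vn n → Bdln n) (x y z : Vn n) : ℝ :=
  2 * p x (Φp x y) (Φm x z)

/-- The generalized Amari–Chentsov cubic tensor. -/
def Ctensor {n : ℕ} (p : Vn n → Pairn n) (Ap Am : Vn n → Connn n)
    (Φp Φm : Vn n → Bdln n) (X Y Z : Vn n → Vn n) (x : Vn n) : ℝ :=
  -2 * (p x (cov Ap X (secPhi Φp Y) x) (Φm x (Z x))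
        - p x (Φp x (Z x)) (cov Am X (secPhi Φm Y) x))

/-- The relative torsion `T(X,Y) = ∇_X(ΦY) − ∇_Y(ΦX) − Φ[X,Y]`. -/
def Ttor {n : ℕ} (A : Vn n → Connn n) (Φ : Vn n → Bdln n)
    (X Y : Vn n → Vn n) (x : Vn n) : Vn n :=
  cov A X (secPhi Φ Y) x - cov A Y (secPhi Φ X) x - Φ x (lieB X Y x)

/-- The Kossowski pseudo-connection. -/
def Koss {n : ℕ} (p : Vn n → Pairn n) (Φp Φm : Vn n → Bdln n)
    (X Y Z : Vn n → Vn n) (x : Vn n) : ℝ :=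
  fderiv ℝ (fun y => p y (Φp y (Y y)) (Φm y (Z y))) x (X x)
  + fderiv ℝ (fun y => p y (Φp y (Z y)) (Φm y (X y))) x (Y x)
  - fderiv ℝ (fun y => p y (Φp y (X y)) (Φm y (Y y))) x (Z x)
  - p x (Φp x (X x)) (Φm x (lieB Y Z x))
  + p x (Φp x (Y x)) (Φm x (lieB Z X x))
  + p x (Φp x (Z x)) (Φm x (lieB X Y x))

/-- The curvature of a connection form `A` at `x` in directions `v`, `w`. -/
def curvA {n : ℕ} (A : Vn n → Connn n) (x v w : Vn n) : Vn n →L[ℝ] Vn n :=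
  fderiv ℝ A x v w - fderiv ℝ A x w v + (A x v).comp (A x w) - (A x w).comp (A x v)

/-- Paper's Lemma 3.11 (in a trivialization): in the coordinate quasi-Codazzi setup,
if `Φ⁺ x` and `Φ⁻ x` are invertible for every `x ∈ U` (with pointwise inverses `Ψ⁺ x`,
`Ψ⁻ x`), then the induced connections `∇̃⁺_X Y = (Φ⁺)⁻¹ ∇⁺_X(Φ⁺Y)` and
`∇̃⁻_X Z = (Φ⁻)⁻¹ ∇⁻_X(Φ⁻Z)` are mutually dual with respect to `h`. -/
theorem statement8 {n : ℕ} (U : Set (Vn n)) (hUopen : IsOpen U)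
    (p : Vn n → Pairn n) (hpsmooth : ContDiffOn ℝ (⊤ : ℕ∞) p U)
    (Ap Am : Vn n → Connn n)
    (hApsmooth : ContDiffOn ℝ (⊤ : ℕ∞) Ap U) (hAmsmooth : ContDiffOn ℝ (⊤ : ℕ∞) Am U)
    (hdual : ∀ x ∈ U, ∀ v a b : Vn n,
      fderiv ℝ p x v a b = p x (Ap x v a) b + p x a (Am x v b))
    (Φp Φm : Vn n → Bdln n)
    (hΦpsmooth : ContDiffOn ℝ (⊤ : ℕ∞) Φp U) (hΦmsmooth : ContDiffOn ℝ (⊤ : ℕ∞) Φm U)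
    (hLag : ∀ x ∈ U, ∀ y z : Vn n, p x (Φp x y) (Φm x z) = p x (Φp x z) (Φm x y))
    -- pointwise inverses of Φ⁺ and Φ⁻ (so Φ⁺ x and Φ⁻ x are invertible on U)
    (Ψp Ψm : Vn n → Bdln n)
    (hΨp : ∀ x ∈ U, (∀ v : Vn n, Ψp x (Φp x v) = v) ∧ (∀ v : Vn n, Φp x (Ψp x v) = v))
    (hΨm : ∀ x ∈ U, (∀ v : Vn n, Ψm x (Φm x v) = v) ∧ (∀ v : Vn n, Φm x (Ψm x v) = v)) :
    ∀ X Y Z : Vn n → Vn n,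
      ContDiffOn ℝ (⊤ : ℕ∞) X U → ContDiffOn ℝ (⊤ : ℕ∞) Y U → ContDiffOn ℝ (⊤ : ℕ∞) Z U →
      ∀ x ∈ U,
        fderiv ℝ (fun y => hmet p Φp Φm y (Y y) (Z y)) x (X x)
          = hmet p Φp Φm x (Ψp x (cov Ap X (secPhi Φp Y) x)) (Z x)
            + hmet p Φp Φm x (Y x) (Ψm x (cov Am X (secPhi Φm Z) x)) := by

  intro X Y Z hX hY hZ x hx
  have hxU : U ∈ nhds x := hUopen.mem_nhds hx
  have dp : DifferentiableAt ℝ p x := (hpsmooth.contDiffAt hxU).differentiableAt (by simp)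
  have dΦp : DifferentiableAt ℝ Φp x := (hΦpsmooth.contDiffAt hxU).differentiableAt (by simp)
  have dΦm : DifferentiableAt ℝ Φm x := (hΦmsmooth.contDiffAt hxU).differentiableAt (by simp)
  have dY : DifferentiableAt ℝ Y x := (hY.contDiffAt hxU).differentiableAt (by simp)
  have dZ : DifferentiableAt ℝ Z x := (hZ.contDiffAt hxU).differentiableAt (by simp)
  have hf : HasFDerivAt (secPhi Φp Y)
      ((Φp x).comp (fderiv ℝ Y x) + (fderiv ℝ Φp x).flip (Y x)) x :=
    dΦp.hasFDerivAt.clm_apply dY.hasFDerivAt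
  have hg : HasFDerivAt (secPhi Φm Z)
      ((Φm x).comp (fderiv ℝ Z x) + (fderiv ℝ Φm x).flip (Z x)) x :=
    dΦm.hasFDerivAt.clm_apply dZ.hasFDerivAt
  have hF : HasFDerivAt (fun y => p y (secPhi Φp Y y) (secPhi Φm Z y))
      ((p x (secPhi Φp Y x)).comp ((Φm x).comp (fderiv ℝ Z x) + (fderiv ℝ Φm x).flip (Z x))
        + ((p x).comp ((Φp x).comp (fderiv ℝ Y x) + (fderiv ℝ Φp x).flip (Y x))
            + (fderiv ℝ p x).flip (secPhi Φp Y x)).flip (secPhi Φm Z x)) x :=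
    (dp.hasFDerivAt.clm_apply hf).clm_apply hg
  have hH : HasFDerivAt (fun y => hmet p Φp Φm y (Y y) (Z y))
      ((2:ℝ) • ((p x (secPhi Φp Y x)).comp ((Φm x).comp (fderiv ℝ Z x) + (fderiv ℝ Φm x).flip (Z x))
        + ((p x).comp ((Φp x).comp (fderiv ℝ Y x) + (fderiv ℝ Φp x).flip (Y x))
            + (fderiv ℝ p x).flip (secPhi Φp Y x)).flip (secPhi Φm Z x))) x := by
    have := hF.const_smul (2 : ℝ)
    simpa [hmet, secPhi, Pi.smul_def, smul_eq_mul] using this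
  rw [hH.fderiv]
  rw [hmet, hmet, (hΨp x hx).2, (hΨm x hx).2, cov, cov, hf.fderiv, hg.fderiv]
  simp only [secPhi, ContinuousLinearMap.add_apply, ContinuousLinearMap.comp_apply,
    ContinuousLinearMap.flip_apply, ContinuousLinearMap.smul_apply, smul_eq_mul,
    map_add, ContinuousLinearMap.map_add, ContinuousLinearMap.add_apply]
  have hd := hdual x hx (X x) (Φp x (Y x)) (Φm x (Z x))
  rw [hd]
  ring
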